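/- Federer–Fleming-type theorem: ι_n = γ_n, where ι_n is the minimum over n pairwise disjoint nonempty subsets {Q_i} of (1/n)∑_i ∂(Q_i)/π(Q_i), and γ_n is the minimum over families {f_i}_{i=1}^n of nonzero nonnegative functions on V that are pairwise orthogonal with respect to π and normalized by ∑_u f_i(u)π(u) = 1, of (1/n)∑_i ∑_{u,v} (f_i(u)−f_i(v))⁺ φ(u,v). -/
import Mathlib


open Finset

/-- Outgoing boundary flow `∂(Q) = ∑_{u∈Q, v∉Q} K(u,v)π(u)`. -/
noncomputable def dpart {V : Type*} [Fintype V] [DecidableEq V]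
    (K : V → V → ℝ) (π : V → ℝ) (Q : Finset V) : ℝ :=
  ∑ u ∈ Q, ∑ v ∈ Qᶜ, K u v * π u

/-- `π(Q) = ∑_{u∈Q} π(u)`. -/
noncomputable def pim {V : Type*} (π : V → ℝ) (Q : Finset V) : ℝ :=
  ∑ u ∈ Q, π u

/-- The `n`-th isoperimetric constant: minimum of the mean normalized boundary over
families of `n` pairwise disjoint nonempty subsets of `V`. -/
noncomputable def iotaD {V : Type*} [Fintype V] [DecidableEq V]
    (K : V → V → ℝ) (π : V → ℝ) (n : ℕ) : ℝ :=
  sInf {x : ℝ | ∃ Q : Fin n → Finset V, (∀ i, (Q i).Nonempty) ∧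
    Pairwise (Function.onFun Disjoint Q) ∧
    x = (∑ i, dpart K π (Q i) / pim π (Q i)) / n}

/-- The `n`-th partition isoperimetric constant: minimum of the mean normalized boundary
over partitions of `V` into `n` nonempty parts. -/
noncomputable def iotaP {V : Type*} [Fintype V] [DecidableEq V]
    (K : V → V → ℝ) (π : V → ℝ) (n : ℕ) : ℝ :=
  sInf {x : ℝ | ∃ Q : Fin n → Finset V, (∀ i, (Q i).Nonempty) ∧
    Pairwise (Function.onFun Disjoint Q) ∧
    Finset.univ.biUnion Q = Finset.univ ∧
    x = (∑ i, dpart K π (Q i) / pim π (Q i)) / n}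

/-- The functional (Federer–Fleming) constant `γ_n`: minimum of the mean `L¹` gradient norm
over positive orthonormal families of `n` functions. -/
noncomputable def gammaN {V : Type*} [Fintype V]
    (K : V → V → ℝ) (π : V → ℝ) (n : ℕ) : ℝ :=
  sInf {x : ℝ | ∃ f : Fin n → V → ℝ,
    (∀ i, f i ≠ 0) ∧ (∀ i u, 0 ≤ f i u) ∧
    (∀ i, ∑ u, f i u * π u = 1) ∧
    (Pairwise fun i j => ∑ u, f i u * f j u * π u = 0) ∧
    x = (∑ i, ∑ u, ∑ v, max (f i u - f i v) 0 * (K u v * π u)) / n}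

section Aux
variable {V : Type*} [Fintype V] [DecidableEq V] (K : V → V → ℝ) (π : V → ℝ)

lemma ff_ind_sum (c : ℝ) (A : Finset V) (h : V → V → ℝ) :
    ∑ u, ∑ v, (if u ∈ A ∧ v ∉ A then c else 0) * h u v
      = c * ∑ u ∈ A, ∑ v ∈ Aᶜ, h u v := by
  rw [Finset.mul_sum]
  rw [← Finset.sum_subset (Finset.subset_univ A)]
  · refine Finset.sum_congr rfl fun u hu => ?_
    rw [Finset.mul_sum, ← Finset.sum_subset (Finset.subset_univ Aᶜ)]
    · refine Finset.sum_congr rfl fun v hv => ?_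
      simp [hu, Finset.mem_compl.mp hv]
    · intro v _ hv
      have : v ∈ A := by simpa using hv
      simp [this]
  · intro u _ hu
    exact Finset.sum_eq_zero fun v _ => by simp [hu]

lemma ff_egrad_split (f g : V → ℝ) (c : ℝ) (A : Finset V)
    (h : ∀ u v, max (f u - f v) 0 = max (g u - g v) 0 + (if u ∈ A ∧ v ∉ A then c else 0)) :
    ∑ u, ∑ v, max (f u - f v) 0 * (K u v * π u)
      = (∑ u, ∑ v, max (g u - g v) 0 * (K u v * π u)) + c * dpart K π A := by
  have : ∀ u v, max (f u - f v) 0 * (K u v * π u)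
      = max (g u - g v) 0 * (K u v * π u) + (if u ∈ A ∧ v ∉ A then c else 0) * (K u v * π u) := by
    intro u v; rw [h u v, add_mul]
  simp_rw [this, Finset.sum_add_distrib]
  rw [ff_ind_sum]
  rfl

lemma ff_ind_pim (c : ℝ) (A : Finset V) :
    ∑ u, (if u ∈ A then c else 0) * π u = c * pim π A := by
  rw [pim, Finset.mul_sum, ← Finset.sum_subset (Finset.subset_univ A)]
  · exact Finset.sum_congr rfl fun u hu => by simp [hu]
  · intro u _ hu; simp [hu]

lemma ff_dpart_nonneg (hK0 : ∀ u v, 0 ≤ K u v) (hπ : ∀ u, 0 < π u) (Q : Finset V) :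
    0 ≤ dpart K π Q :=
  Finset.sum_nonneg fun u _ => Finset.sum_nonneg fun v _ =>
    mul_nonneg (hK0 u v) (hπ u).le

lemma ff_pim_pos (hπ : ∀ u, 0 < π u) {Q : Finset V} (hQ : Q.Nonempty) :
    0 < pim π Q :=
  Finset.sum_pos (fun u _ => hπ u) hQ

lemma ff_key (hK0 : ∀ u v, 0 ≤ K u v) (hπ : ∀ u, 0 < π u) :
    ∀ N (f : V → ℝ), ((Finset.univ.filter fun u => 0 < f u).image f).card ≤ N →
    (∀ u, 0 ≤ f u) → (∃ u, 0 < f u) →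
    ∃ Q : Finset V, Q.Nonempty ∧ (∀ u ∈ Q, 0 < f u) ∧
      dpart K π Q * (∑ u, f u * π u)
        ≤ (∑ u, ∑ v, max (f u - f v) 0 * (K u v * π u)) * pim π Q := by
  intro N
  induction N with
  | zero =>
    intro f hcard _ ⟨u, hu⟩
    exfalso
    have : f u ∈ (Finset.univ.filter fun u => 0 < f u).image f :=
      Finset.mem_image_of_mem f (by simp [hu])
    have := Finset.card_pos.mpr ⟨f u, this⟩
    omega
  | succ N ih =>
    intro f hcard hf0 hfpos
    set P := (Finset.univ.filter fun u => 0 < f u).image f with hP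
    have hPne : P.Nonempty := by
      obtain ⟨u, hu⟩ := hfpos
      exact ⟨f u, Finset.mem_image_of_mem f (by simp [hu])⟩
    set m := P.max' hPne with hm
    have hmP : m ∈ P := P.max'_mem hPne
    obtain ⟨um, hum, hfum⟩ : ∃ u, 0 < f u ∧ f u = m := by
      obtain ⟨u, hu, hfu⟩ := Finset.mem_image.mp hmP
      exact ⟨u, (Finset.mem_filter.mp hu).2, hfu⟩
    have hm0 : 0 < m := hfum ▸ hum
    have hfleM : ∀ u, f u ≤ m := by
      intro u
      rcases lt_or_ge 0 (f u) with h | h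
      · exact P.le_max' _ (Finset.mem_image_of_mem f (by simp [h]))
      · linarith
    set m' : ℝ := if h : (P.erase m).Nonempty then (P.erase m).max' h else 0 with hm'
    have hm'lt : m' < m := by
      rw [hm']
      split
      · next h =>
        have := (P.erase m).max'_mem h
        have h1 := Finset.mem_of_mem_erase this
        have h2 := Finset.ne_of_mem_erase this
        exact lt_of_le_of_ne (P.le_max' _ h1) h2
      · exact hm0
    have hm'0 : 0 ≤ m' := by
      rw [hm']
      split
      · next h =>
        have := (P.erase m).max'_mem h
        obtain ⟨u, hu, hfu⟩ := Finset.mem_image.mp (Finset.mem_of_mem_erase this)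
        have := (Finset.mem_filter.mp hu).2
        linarith [hfu ▸ this]
      · exact le_refl 0
    -- key fact: values above m' are exactly m
    have hkey : ∀ u, m' < f u → f u = m := by
      intro u hu
      by_contra hne
      have hfu0 : 0 < f u := lt_of_le_of_lt hm'0 hu
      have hfuP : f u ∈ P := Finset.mem_image_of_mem f (by simp [hfu0])
      have hfuE : f u ∈ P.erase m := Finset.mem_erase.mpr ⟨hne, hfuP⟩
      have hne' : (P.erase m).Nonempty := ⟨f u, hfuE⟩
      have : f u ≤ m' := by
        rw [hm', dif_pos hne']
        exact (P.erase m).le_max' _ hfuE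
      linarith
    have hkey' : ∀ u, f u ≠ m → f u ≤ m' := by
      intro u hu
      by_contra h
      exact hu (hkey u (lt_of_not_ge h))
    set A : Finset V := Finset.univ.filter (fun u => m' < f u) with hA
    have hmemA : ∀ u, u ∈ A ↔ f u = m := by
      intro u
      constructor
      · intro hu; exact hkey u (Finset.mem_filter.mp hu).2
      · intro hu; exact Finset.mem_filter.mpr ⟨Finset.mem_univ u, hu ▸ hm'lt⟩
    have hAne : A.Nonempty := ⟨um, (hmemA um).mpr hfum⟩
    have hApos : ∀ u ∈ A, 0 < f u := fun u hu =>
      lt_of_le_of_lt hm'0 (Finset.mem_filter.mp hu).2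
    set c : ℝ := m - m' with hc
    have hc0 : 0 < c := by rw [hc]; linarith
    set g : V → ℝ := fun u => min (f u) m' with hg
    have hg0 : ∀ u, 0 ≤ g u := fun u => le_min (hf0 u) hm'0
    have hgA : ∀ u ∈ A, g u = m' := by
      intro u hu
      have : f u = m := (hmemA u).mp hu
      rw [hg]; simp only [this]; exact min_eq_right hm'lt.le
    have hgA' : ∀ u, u ∉ A → g u = f u := by
      intro u hu
      have : f u ≤ m' := by
        by_contra h
        exact hu (Finset.mem_filter.mpr ⟨Finset.mem_univ u, lt_of_not_ge h⟩)
      rw [hg]; exact min_eq_left this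
    -- pointwise gradient splitting
    have hsplit : ∀ u v, max (f u - f v) 0
        = max (g u - g v) 0 + (if u ∈ A ∧ v ∉ A then c else 0) := by
      intro u v
      by_cases hu : u ∈ A <;> by_cases hv : v ∈ A
      · have h1 : f u = m := (hmemA u).mp hu
        have h2 : f v = m := (hmemA v).mp hv
        have h3 := hgA u hu; have h4 := hgA v hv
        simp [hu, hv, h1, h2, h3, h4]
      · have h1 : f u = m := (hmemA u).mp hu
        have h2 : g u = m' := hgA u hu
        have h3 : g v = f v := hgA' v hv
        have h4 : f v ≤ m' := by
          by_contra h
          exact hv (Finset.mem_filter.mpr ⟨Finset.mem_univ v, lt_of_not_ge h⟩)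
        rw [if_pos ⟨hu, hv⟩, h1, h2, h3,
          max_eq_left (by linarith : (0:ℝ) ≤ m - f v),
          max_eq_left (by linarith : (0:ℝ) ≤ m' - f v)]
        ring
      · have h1 : f v = m := (hmemA v).mp hv
        have h2 : g v = m' := hgA v hv
        have h3 : g u = f u := hgA' u hu
        have h4 : f u ≤ m' := by
          by_contra h
          exact hu (Finset.mem_filter.mpr ⟨Finset.mem_univ u, lt_of_not_ge h⟩)
        rw [if_neg (by tauto), h1, h2, h3,
          max_eq_right (by linarith : f u - m ≤ 0),
          max_eq_right (by linarith : f u - m' ≤ 0)]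
        ring
      · have h3 : g u = f u := hgA' u hu
        have h4 : g v = f v := hgA' v hv
        rw [if_neg (by tauto), h3, h4, add_zero]
    have hEsplit := ff_egrad_split K π f g c A hsplit
    -- mass splitting
    have hfg : ∀ u, f u = g u + (if u ∈ A then c else 0) := by
      intro u
      by_cases hu : u ∈ A
      · rw [hgA u hu, if_pos hu, hc]
        have := (hmemA u).mp hu
        linarith
      · rw [hgA' u hu, if_neg hu, add_zero]
    have hSsplit : ∑ u, f u * π u = (∑ u, g u * π u) + c * pim π A := by
      have : ∀ u, f u * π u = g u * π u + (if u ∈ A then c else 0) * π u := by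
        intro u; rw [hfg u, add_mul]
      simp_rw [this, Finset.sum_add_distrib, ff_ind_pim]
    by_cases hgpos : ∃ u, 0 < g u
    · -- inductive case
      have hcardg : ((Finset.univ.filter fun u => 0 < g u).image g).card ≤ N := by
        have hsub : (Finset.univ.filter fun u => 0 < g u).image g ⊆ P.erase m := by
          intro x hx
          obtain ⟨u, hu, hgu⟩ := Finset.mem_image.mp hx
          have hgu0 : 0 < g u := (Finset.mem_filter.mp hu).2
          rcases le_or_gt (f u) m' with h | h
          · have hgf : g u = f u := min_eq_left h
            refine Finset.mem_erase.mpr ⟨?_, ?_⟩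
            · rw [← hgu, hgf]; linarith
            · rw [← hgu, hgf]
              exact Finset.mem_image_of_mem f (by simp [hgf ▸ hgu0])
          · have hgm' : g u = m' := min_eq_right (le_of_lt h)
            have hm'pos : 0 < m' := by rw [← hgm']; exact hgu0
            have hne' : (P.erase m).Nonempty := by
              by_contra hcon
              rw [hm', dif_neg hcon] at hm'pos
              exact lt_irrefl 0 hm'pos
            have : m' ∈ P.erase m := by
              rw [hm', dif_pos hne']
              exact (P.erase m).max'_mem hne'
            rwa [← hgu, hgm']
        calc ((Finset.univ.filter fun u => 0 < g u).image g).card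
            ≤ (P.erase m).card := Finset.card_le_card hsub
          _ = P.card - 1 := Finset.card_erase_of_mem hmP
          _ ≤ N := by omega
      obtain ⟨Q', hQ'ne, hQ'pos, hQ'ineq⟩ := ih g hcardg hg0 hgpos
      have hQ'posf : ∀ u ∈ Q', 0 < f u := fun u hu =>
        lt_of_lt_of_le (hQ'pos u hu) (min_le_left _ _)
      have hπQ' : 0 < pim π Q' := ff_pim_pos π hπ hQ'ne
      have hπA : 0 < pim π A := ff_pim_pos π hπ hAne
      have hDQ' : 0 ≤ dpart K π Q' := ff_dpart_nonneg K π hK0 hπ Q'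
      have hDA : 0 ≤ dpart K π A := ff_dpart_nonneg K π hK0 hπ A
      have hSg : 0 ≤ ∑ u, g u * π u :=
        Finset.sum_nonneg fun u _ => mul_nonneg (hg0 u) (hπ u).le
      have hEg : 0 ≤ ∑ u, ∑ v, max (g u - g v) 0 * (K u v * π u) :=
        Finset.sum_nonneg fun u _ => Finset.sum_nonneg fun v _ =>
          mul_nonneg (le_max_right _ _) (mul_nonneg (hK0 u v) (hπ u).le)
      by_cases hcase : dpart K π Q' * pim π A ≤ dpart K π A * pim π Q'
      · refine ⟨Q', hQ'ne, hQ'posf, ?_⟩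
        rw [hSsplit, hEsplit]
        nlinarith [hQ'ineq, hcase, hc0, hπA, hπQ']
      · push_neg at hcase
        refine ⟨A, hAne, hApos, ?_⟩
        rw [hSsplit, hEsplit]
        have h2 : dpart K π A * (∑ u, g u * π u) * pim π Q'
            ≤ (∑ u, ∑ v, max (g u - g v) 0 * (K u v * π u)) * pim π A * pim π Q' := by
          nlinarith [hQ'ineq, hcase.le, hSg, hπA]
        have h3 : dpart K π A * (∑ u, g u * π u)
            ≤ (∑ u, ∑ v, max (g u - g v) 0 * (K u v * π u)) * pim π A :=
          le_of_mul_le_mul_right (by linarith) hπQ'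
        nlinarith [h3, hc0, hDA, hπA]
    · -- base case: g = 0, so f = m * 1_A
      push_neg at hgpos
      have hgz : ∀ u, g u = 0 := fun u => le_antisymm (hgpos u) (hg0 u)
      have hEgz : (∑ u, ∑ v, max (g u - g v) 0 * (K u v * π u)) = 0 :=
        Finset.sum_eq_zero fun u _ => Finset.sum_eq_zero fun v _ => by
          simp [hgz u, hgz v]
      have hSgz : (∑ u, g u * π u) = 0 :=
        Finset.sum_eq_zero fun u _ => by simp [hgz u]
      refine ⟨A, hAne, hApos, ?_⟩
      rw [hSsplit, hEsplit, hEgz, hSgz, zero_add, zero_add]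
      ring_nf
      exact le_refl _
end Aux

theorem federer_fleming {V : Type*} [Fintype V] [DecidableEq V]
    (K : V → V → ℝ) (π : V → ℝ)
    (hK0 : ∀ u v, 0 ≤ K u v) (hK1 : ∀ u, ∑ v, K u v = 1)
    (hπ : ∀ u, 0 < π u) (hπ1 : ∑ u, π u = 1)
    (hstat : ∀ v, ∑ u, π u * K u v = π v)
    (n : ℕ) (hn : 0 < n) (hcard : n ≤ Fintype.card V) :
    iotaD K π n = gammaN K π n := by
  set Sι := {x : ℝ | ∃ Q : Fin n → Finset V, (∀ i, (Q i).Nonempty) ∧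
    Pairwise (Function.onFun Disjoint Q) ∧
    x = (∑ i, dpart K π (Q i) / pim π (Q i)) / n} with hSι
  set Sγ := {x : ℝ | ∃ f : Fin n → V → ℝ,
    (∀ i, f i ≠ 0) ∧ (∀ i u, 0 ≤ f i u) ∧
    (∀ i, ∑ u, f i u * π u = 1) ∧
    (Pairwise fun i j => ∑ u, f i u * f j u * π u = 0) ∧
    x = (∑ i, ∑ u, ∑ v, max (f i u - f i v) 0 * (K u v * π u)) / n} with hSγ
  -- Sι ⊆ Sγ
  have hsub : Sι ⊆ Sγ := by
    rintro x ⟨Q, hQne, hQdisj, rfl⟩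
    refine ⟨fun i u => if u ∈ Q i then (pim π (Q i))⁻¹ else 0, ?_, ?_, ?_, ?_, ?_⟩
    · intro i h
      obtain ⟨u, hu⟩ := hQne i
      have := congrFun h u
      simp only [hu, if_true, Pi.zero_apply] at this
      exact (ne_of_gt (inv_pos.mpr (ff_pim_pos π hπ (hQne i)))) this
    · intro i u
      dsimp only
      split
      · exact (inv_pos.mpr (ff_pim_pos π hπ (hQne i))).le
      · exact le_refl 0
    · intro i
      rw [ff_ind_pim π]
      exact inv_mul_cancel₀ (ne_of_gt (ff_pim_pos π hπ (hQne i)))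
    · intro i j hij
      refine Finset.sum_eq_zero fun u _ => ?_
      by_cases hu : u ∈ Q i
      · have : u ∉ Q j := Finset.disjoint_left.mp (hQdisj hij) hu
        simp [hu, this]
      · simp [hu]
    · congr 1
      refine Finset.sum_congr rfl fun i _ => ?_
      have hc : (0:ℝ) ≤ (pim π (Q i))⁻¹ := (inv_pos.mpr (ff_pim_pos π hπ (hQne i))).le
      have := ff_egrad_split K π (fun u => if u ∈ Q i then (pim π (Q i))⁻¹ else 0)
        (fun _ => 0) (pim π (Q i))⁻¹ (Q i) ?_
      · rw [this]
        have hEz : (∑ u, ∑ v, max ((0:ℝ) - 0) 0 * (K u v * π u)) = 0 :=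
          Finset.sum_eq_zero fun u _ => Finset.sum_eq_zero fun v _ => by simp
        rw [hEz, zero_add, div_eq_inv_mul]
      · intro u v
        by_cases hu : u ∈ Q i <;> by_cases hv : v ∈ Q i <;>
          simp [hu, hv, max_eq_left hc, (ff_pim_pos π hπ (hQne i)).le]
  -- Sι nonempty
  have hιne : Sι.Nonempty := by
    have : n ≤ Fintype.card V := hcard
    obtain ⟨emb⟩ : Nonempty (Fin n ↪ V) := by
      apply Function.Embedding.nonempty_of_card_le
      simpa using hcard
    refine ⟨_, fun i => {emb i}, fun i => Finset.singleton_nonempty _, ?_, rfl⟩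
    intro i j hij
    simp only [Function.onFun, Finset.disjoint_singleton]
    exact fun h => hij (emb.injective h)
  have hγne : Sγ.Nonempty := hιne.mono hsub
  -- bounded below by 0
  have hιbdd : BddBelow Sι := by
    refine ⟨0, ?_⟩
    rintro x ⟨Q, hQne, _, rfl⟩
    apply div_nonneg _ (Nat.cast_nonneg n)
    exact Finset.sum_nonneg fun i _ => div_nonneg
      (ff_dpart_nonneg K π hK0 hπ _) (ff_pim_pos π hπ (hQne i)).le
  have hγbdd : BddBelow Sγ := by
    refine ⟨0, ?_⟩
    rintro x ⟨f, _, hf0, _, _, rfl⟩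
    apply div_nonneg _ (Nat.cast_nonneg n)
    exact Finset.sum_nonneg fun i _ => Finset.sum_nonneg fun u _ =>
      Finset.sum_nonneg fun v _ =>
        mul_nonneg (le_max_right _ _) (mul_nonneg (hK0 u v) (hπ u).le)
  rw [iotaD, gammaN]
  apply le_antisymm
  · -- ι ≤ γ
    apply le_csInf hγne
    rintro x ⟨f, hfne, hf0, hf1, horth, rfl⟩
    have hkey : ∀ i : Fin n, ∃ Q : Finset V, Q.Nonempty ∧ (∀ u ∈ Q, 0 < f i u) ∧
        dpart K π Q * (∑ u, f i u * π u)
          ≤ (∑ u, ∑ v, max (f i u - f i v) 0 * (K u v * π u)) * pim π Q := by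
      intro i
      apply ff_key K π hK0 hπ _ (f i) (le_refl _) (hf0 i)
      by_contra h
      push_neg at h
      exact hfne i (funext fun u => le_antisymm (h u) (hf0 i u))
    choose Q hQne hQpos hQineq using hkey
    have hdisj : Pairwise (Function.onFun Disjoint Q) := by
      intro i j hij
      rw [Function.onFun, Finset.disjoint_left]
      intro u hui huj
      have h0 := horth hij
      have hterm : f i u * f j u * π u = 0 := by
        have := (Finset.sum_eq_zero_iff_of_nonneg fun v _ =>
          mul_nonneg (mul_nonneg (hf0 i v) (hf0 j v)) (hπ v).le).mp h0
        exact this u (Finset.mem_univ u)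
      have : 0 < f i u * f j u * π u :=
        mul_pos (mul_pos (hQpos i u hui) (hQpos j u huj)) (hπ u)
      linarith
    have hmem : (∑ i, dpart K π (Q i) / pim π (Q i)) / n ∈ Sι :=
      ⟨Q, hQne, hdisj, rfl⟩
    refine le_trans (csInf_le hιbdd hmem) ?_
    have hle : ∀ i, dpart K π (Q i) / pim π (Q i)
        ≤ ∑ u, ∑ v, max (f i u - f i v) 0 * (K u v * π u) := by
      intro i
      rw [div_le_iff₀ (ff_pim_pos π hπ (hQne i))]
      have := hQineq i
      rwa [hf1 i, mul_one] at this
    gcongr with i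
    exact hle i
  · exact csInf_le_csInf hγbdd hιne hsub
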